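/- Let N ∈ ℕ, let K : Fin N → Fin N → ℂ be a symmetric kernel (K j k = K k j for all j, k), and let z, w : Fin N → ℂ. Then for every finite subset α of Fin N, the symmetric-scheme Gaudin determinant satisfies ρ(z + w, α) = ∑_{β ⊆ α} ρ(z, β) · ρ(w, α \ β), where the sum runs over all subsets β of α. (This is the identity ρ^s_{l₁+l₂}({u}_N) = ∑_{α ∪ ᾱ = {u}_N} ρ^s_{l₁}(α) ρ^s_{l₂}(ᾱ) used in the paper, with z_j = l₁ p'(u_j) and w_j = l₂ p'(u_j).) -/

import Mathlib

open Finset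

/-- The symmetric-scheme Gaudin determinant: the determinant of the square matrix
indexed by `α` whose `(j,j)` entry is `z j + ∑_{l ∈ α, l ≠ j} K j l` and whose
`(j,k)` entry for `j ≠ k` is `-(K j k)`. By convention it equals `1` on `α = ∅`. -/
noncomputable def gaudin {N : ℕ} (K : Fin N → Fin N → ℂ) (z : Fin N → ℂ)
    (α : Finset (Fin N)) : ℂ :=
  Matrix.det (Matrix.of fun j k : α =>
    if j = k then z j + ∑ l ∈ α.erase (j : Fin N), K j l else -K (j : Fin N) (k : Fin N))

section aux

variable {N : ℕ} (K : Fin N → Fin N → ℂ)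

private lemma gaudin_empty (z : Fin N → ℂ) : gaudin K z ∅ = 1 := by
  have : IsEmpty {x : Fin N // x ∈ (∅ : Finset (Fin N))} :=
    ⟨fun x => (Finset.notMem_empty _ x.2)⟩
  rw [gaudin]
  exact Matrix.det_isEmpty

private lemma gaudin_congr {z z' : Fin N → ℂ} {α : Finset (Fin N)}
    (h : ∀ j ∈ α, z j = z' j) : gaudin K z α = gaudin K z' α := by
  unfold gaudin
  congr 1
  ext j k
  simp only [Matrix.of_apply]
  split
  · rw [h j j.2]
  · rfl

private lemma gaudin_eq_zero {z : Fin N → ℂ} {α : Finset (Fin N)} (hα : α.Nonempty)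
    (hz : ∀ j ∈ α, z j = 0) : gaudin K z α = 0 := by
  classical
  obtain ⟨a, ha⟩ := hα
  apply Matrix.exists_mulVec_eq_zero_iff.mp
  refine ⟨fun _ => 1, fun h => ?_, ?_⟩
  · have := congrFun h ⟨a, ha⟩
    simp at this
  · funext j
    simp only [Matrix.mulVec, dotProduct, mul_one, Matrix.of_apply, Pi.zero_apply]
    have h1 : ∀ k : {x : Fin N // x ∈ α},
        (if j = k then z (j : Fin N) + ∑ l ∈ α.erase (j : Fin N), K j l
          else -K (j : Fin N) (k : Fin N))
        = (if j = k then (z (j : Fin N) + ∑ l ∈ α.erase (j : Fin N), K j l)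
            + K (j : Fin N) (k : Fin N) else 0) - K (j : Fin N) (k : Fin N) := by
      intro k
      split <;> ring
    simp only [h1]
    rw [Finset.sum_sub_distrib, Finset.sum_ite_eq]
    simp only [Finset.mem_univ, if_true]
    have h2 : ∑ k : {x : Fin N // x ∈ α}, K (j : Fin N) (k : Fin N)
        = ∑ l ∈ α, K (j : Fin N) l := Finset.sum_coe_sort α fun l => K (j : Fin N) l
    rw [h2, ← Finset.sum_erase_add α _ j.2, hz (j : Fin N) j.2]
    ring

/-- The index equivalence used to peel off the row and column of `a`. -/
private def sumEquiv {α : Finset (Fin N)} {a : Fin N} (ha : a ∈ α) :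
    ({x : Fin N // x ∈ α.erase a} ⊕ Unit) ≃ {x : Fin N // x ∈ α} where
  toFun := Sum.elim (fun x => ⟨x.1, Finset.mem_of_mem_erase x.2⟩) (fun _ => ⟨a, ha⟩)
  invFun y := if h : (y : Fin N) = a then Sum.inr () else
    Sum.inl ⟨(y : Fin N), Finset.mem_erase.mpr ⟨h, y.2⟩⟩
  left_inv s := by
    rcases s with x | u
    · have hx : (x : Fin N) ≠ a := (Finset.mem_erase.mp x.2).1
      simp [hx]
    · simp
  right_inv y := by
    by_cases h : (y : Fin N) = a
    · simp only [dif_pos h, Sum.elim_inr]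
      exact Subtype.ext h.symm
    · simp [h]

private lemma erase_sum_split {α : Finset (Fin N)} {a j : Fin N}
    (ha : a ∈ α) (hja : j ≠ a) :
    ∑ l ∈ α.erase j, K j l = K j a + ∑ l ∈ (α.erase a).erase j, K j l := by
  have h1 : a ∈ α.erase j := Finset.mem_erase.mpr ⟨Ne.symm hja, ha⟩
  rw [← Finset.insert_erase h1, Finset.sum_insert (by simp), Finset.erase_right_comm]

/-- Cofactor expansion of the Gaudin determinant in the variable `z a`. -/
private lemma gaudin_cofactor {α : Finset (Fin N)} {a : Fin N} (ha : a ∈ α) (z : Fin N → ℂ) :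
    gaudin K z α = z a * gaudin K (fun j => z j + K j a) (α.erase a)
      + gaudin K (Function.update z a 0) α := by
  classical
  set M₀ : Matrix {x : Fin N // x ∈ α} {x : Fin N // x ∈ α} ℂ := Matrix.of fun j k =>
    if j = k then Function.update z a 0 (j : Fin N) + ∑ l ∈ α.erase (j : Fin N), K j l
    else -K (j : Fin N) (k : Fin N) with hM₀
  have hM : (Matrix.of fun j k : α =>
      if j = k then z (j : Fin N) + ∑ l ∈ α.erase (j : Fin N), K j l
      else -K (j : Fin N) (k : Fin N))
      = M₀.updateRow ⟨a, ha⟩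
          (M₀ ⟨a, ha⟩ + z a • (Pi.single ⟨a, ha⟩ 1 : {x : Fin N // x ∈ α} → ℂ)) := by
    ext j k
    by_cases hj : j = (⟨a, ha⟩ : {x : Fin N // x ∈ α})
    · rw [hj, Matrix.updateRow_self]
      simp only [Matrix.of_apply, Pi.add_apply, Pi.smul_apply, smul_eq_mul, hM₀]
      by_cases hk : (⟨a, ha⟩ : {x : Fin N // x ∈ α}) = k
      · rw [if_pos hk, if_pos hk, ← hk, Pi.single_eq_same]
        show z a + _ = Function.update z a 0 a + _ + z a * 1
        rw [Function.update_self]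
        ring
      · rw [if_neg hk, if_neg hk, Pi.single_eq_of_ne (fun h => hk h.symm), mul_zero, add_zero]
    · rw [Matrix.updateRow_ne hj]
      simp only [Matrix.of_apply, hM₀]
      have hja : (j : Fin N) ≠ a := fun h => hj (Subtype.ext h)
      rw [Function.update_of_ne hja]
  have hdet1 : gaudin K z α
      = gaudin K (Function.update z a 0) α
        + z a * (M₀.updateRow ⟨a, ha⟩ (Pi.single ⟨a, ha⟩ 1)).det := by
    have h1 : gaudin K z α
        = (M₀.updateRow ⟨a, ha⟩
            (M₀ ⟨a, ha⟩ + z a • (Pi.single ⟨a, ha⟩ 1 : {x : Fin N // x ∈ α} → ℂ))).det :=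
      congrArg Matrix.det hM
    have h0 : gaudin K (Function.update z a 0) α = M₀.det := rfl
    rw [h1, Matrix.det_updateRow_add, Matrix.det_updateRow_smul, Matrix.updateRow_eq_self, h0]
  have hminor : (M₀.updateRow ⟨a, ha⟩ (Pi.single ⟨a, ha⟩ 1)).det
      = gaudin K (fun j => z j + K j a) (α.erase a) := by
    rw [← Matrix.det_submatrix_equiv_self (sumEquiv ha)]
    have hblocks : (M₀.updateRow ⟨a, ha⟩ (Pi.single ⟨a, ha⟩ 1)).submatrix
          (sumEquiv ha) (sumEquiv ha)
        = Matrix.fromBlocks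
            (Matrix.of fun j k : α.erase a =>
              if j = k then (z (j : Fin N) + K (j : Fin N) a)
                  + ∑ l ∈ (α.erase a).erase (j : Fin N), K (j : Fin N) l
              else -K (j : Fin N) (k : Fin N))
            (Matrix.of fun (j : {x : Fin N // x ∈ α.erase a}) (_ : Unit) => -K (j : Fin N) a)
            0 1 := by
      ext s t
      rcases s with j | j <;> rcases t with k | k
      · simp only [Matrix.submatrix_apply, _root_.sumEquiv, Equiv.coe_fn_mk, Sum.elim_inl,
          Matrix.fromBlocks_apply₁₁, Matrix.of_apply]
        have hja : (j : Fin N) ≠ a := (Finset.mem_erase.mp j.2).1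
        have hne : (⟨(j : Fin N), Finset.mem_of_mem_erase j.2⟩ : {x : Fin N // x ∈ α})
            ≠ ⟨a, ha⟩ := fun h => hja (congrArg Subtype.val h)
        rw [Matrix.updateRow_ne hne, hM₀]
        simp only [Matrix.of_apply]
        by_cases hjk : (j : Fin N) = (k : Fin N)
        · have h1 : (⟨(j : Fin N), Finset.mem_of_mem_erase j.2⟩ : {x : Fin N // x ∈ α})
              = ⟨(k : Fin N), Finset.mem_of_mem_erase k.2⟩ := Subtype.ext hjk
          have h2 : j = k := Subtype.ext hjk
          rw [if_pos h1, if_pos h2, Function.update_of_ne hja, erase_sum_split K ha hja]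
          ring
        · have h1 : ¬ ((⟨(j : Fin N), Finset.mem_of_mem_erase j.2⟩ : {x : Fin N // x ∈ α})
              = ⟨(k : Fin N), Finset.mem_of_mem_erase k.2⟩) :=
            fun h => hjk (Subtype.mk_eq_mk.mp h)
          have h2 : ¬ (j = k) := fun h => hjk (congrArg Subtype.val h)
          rw [if_neg h1, if_neg h2]
      · simp only [Matrix.submatrix_apply, _root_.sumEquiv, Equiv.coe_fn_mk, Sum.elim_inl,
          Sum.elim_inr, Matrix.fromBlocks_apply₁₂, Matrix.of_apply]
        have hja : (j : Fin N) ≠ a := (Finset.mem_erase.mp j.2).1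
        have hne : (⟨(j : Fin N), Finset.mem_of_mem_erase j.2⟩ : {x : Fin N // x ∈ α})
            ≠ ⟨a, ha⟩ := fun h => hja (congrArg Subtype.val h)
        rw [Matrix.updateRow_ne hne, hM₀]
        simp only [Matrix.of_apply]
        rw [if_neg hne]
      · simp only [Matrix.submatrix_apply, _root_.sumEquiv, Equiv.coe_fn_mk, Sum.elim_inl,
          Sum.elim_inr, Matrix.fromBlocks_apply₂₁, Matrix.zero_apply]
        have hka : (k : Fin N) ≠ a := (Finset.mem_erase.mp k.2).1
        have hki : (⟨(k : Fin N), Finset.mem_of_mem_erase k.2⟩ : {x : Fin N // x ∈ α})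
            ≠ ⟨a, ha⟩ := fun h => hka (congrArg Subtype.val h)
        rw [Matrix.updateRow_self, Pi.single_eq_of_ne hki]
      · cases j; cases k
        simp only [Matrix.submatrix_apply, _root_.sumEquiv, Equiv.coe_fn_mk, Sum.elim_inr,
          Matrix.fromBlocks_apply₂₂]
        rw [Matrix.updateRow_self, Pi.single_eq_same, Matrix.one_apply_eq]
    rw [hblocks, Matrix.det_fromBlocks_zero₂₁, Matrix.det_one, mul_one]
    rfl
  rw [hdet1, hminor]
  ring

end aux

/-- For a symmetric kernel, `ρ(z + w, α) = ∑_{β ⊆ α} ρ(z, β) · ρ(w, α \ β)`. -/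
theorem gaudin_add_split {N : ℕ} (K : Fin N → Fin N → ℂ)
    (hK : ∀ j k, K j k = K k j) (z w : Fin N → ℂ) (α : Finset (Fin N)) :
    gaudin K (z + w) α = ∑ β ∈ α.powerset, gaudin K z β * gaudin K w (α \ β) := by
  classical
  induction α using Finset.strongInduction generalizing z w with
  | _ α IH =>
  have inner : ∀ γ : Finset (Fin N), γ ⊆ α → ∀ z : Fin N → ℂ,
      (∀ j ∈ α, j ∉ γ → z j = 0) →
      gaudin K (z + w) α = ∑ β ∈ α.powerset, gaudin K z β * gaudin K w (α \ β) := by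
    intro γ
    induction γ using Finset.induction_on with
    | empty =>
      intro _ z hz
      have hzw : gaudin K (z + w) α = gaudin K w α :=
        gaudin_congr K fun j hj => by
          show z j + w j = w j
          rw [hz j hj (Finset.notMem_empty j), zero_add]
      rw [hzw, Finset.sum_eq_single_of_mem ∅ (Finset.empty_mem_powerset α)
        (fun β hβ hβne => by
          have hβn : β.Nonempty := Finset.nonempty_iff_ne_empty.mpr hβne
          rw [gaudin_eq_zero K hβn fun j hj =>
            hz j (Finset.mem_powerset.mp hβ hj) (Finset.notMem_empty j), zero_mul])]
      rw [gaudin_empty, Finset.sdiff_empty, one_mul]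
    | @insert b γ' hbγ' ihγ =>
      intro hsub z hz
      have hbα : b ∈ α := hsub (Finset.mem_insert_self b γ')
      have hγ'sub : γ' ⊆ α := (Finset.subset_insert b γ').trans hsub
      set z₀ : Fin N → ℂ := Function.update z b 0 with hz₀def
      set z' : Fin N → ℂ := fun j => z j + K j b with hz'def
      have hz₀ : ∀ j ∈ α, j ∉ γ' → z₀ j = 0 := by
        intro j hj hjγ'
        by_cases hjb : j = b
        · subst hjb; simp [hz₀def]
        · rw [hz₀def, Function.update_of_ne hjb]
          exact hz j hj (by simp [hjb, hjγ'])
      have base := ihγ hγ'sub z₀ hz₀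
      have eL : gaudin K (z + w) α
          = gaudin K (z₀ + w) α + z b * gaudin K (z' + w) (α.erase b) := by
        have e1 := gaudin_cofactor K hbα (z + w)
        have e2 := gaudin_cofactor K hbα (z₀ + w)
        have hC1 : gaudin K (fun j => (z + w) j + K j b) (α.erase b)
            = gaudin K (z' + w) (α.erase b) := by
          refine gaudin_congr K fun j hj => ?_
          simp only [Pi.add_apply, hz'def]
          ring
        have hC2 : gaudin K (fun j => (z₀ + w) j + K j b) (α.erase b)
            = gaudin K (z' + w) (α.erase b) := by
          refine gaudin_congr K fun j hj => ?_
          have hjb : j ≠ b := (Finset.mem_erase.mp hj).1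
          simp only [Pi.add_apply, hz'def, hz₀def, Function.update_of_ne hjb]
          ring
        have hu : Function.update (z + w) b 0 = Function.update (z₀ + w) b 0 := by
          funext j
          by_cases hjb : j = b
          · rw [hjb, Function.update_self, Function.update_self]
          · rw [Function.update_of_ne hjb, Function.update_of_ne hjb]
            simp only [Pi.add_apply, hz₀def, Function.update_of_ne hjb]
        have hb0 : (z₀ + w) b = w b := by
          show z₀ b + w b = w b
          rw [hz₀def, Function.update_self, zero_add]
        rw [e1, e2, hC1, hC2, hu, hb0]
        simp only [Pi.add_apply]
        ring
      have hsum : ∀ u : Fin N → ℂ,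
          ∑ β ∈ α.powerset, gaudin K u β * gaudin K w (α \ β)
          = (∑ β ∈ (α.erase b).powerset, gaudin K u β * gaudin K w (α \ β))
            + ∑ β ∈ (α.erase b).powerset,
                gaudin K u (insert b β) * gaudin K w (α \ insert b β) := by
        intro u
        have h := Finset.sum_powerset_insert (Finset.notMem_erase b α)
          (fun β => gaudin K u β * gaudin K w (α \ β))
        rwa [Finset.insert_erase hbα] at h
      have hsd : ∀ β ∈ (α.erase b).powerset, α \ insert b β = (α.erase b) \ β := by
        intro β hβ
        ext j
        simp only [Finset.mem_sdiff, Finset.mem_insert, Finset.mem_erase]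
        tauto
      have cof : ∀ β ∈ (α.erase b).powerset,
          gaudin K z (insert b β) = z b * gaudin K z' β + gaudin K z₀ (insert b β) := by
        intro β hβ
        have hbβ : b ∉ β := fun h => Finset.notMem_erase b α (Finset.mem_powerset.mp hβ h)
        have h := gaudin_cofactor K (Finset.mem_insert_self b β) z
        rwa [Finset.erase_insert hbβ] at h
      have hfix : ∀ β ∈ (α.erase b).powerset, gaudin K z β = gaudin K z₀ β := by
        intro β hβ
        refine gaudin_congr K fun j hj => ?_
        have hjb : j ≠ b := fun h =>
          Finset.notMem_erase b α (Finset.mem_powerset.mp hβ (h ▸ hj))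
        rw [hz₀def, Function.update_of_ne hjb]
      have hS1 : ∑ β ∈ (α.erase b).powerset, gaudin K z β * gaudin K w (α \ β)
          = ∑ β ∈ (α.erase b).powerset, gaudin K z₀ β * gaudin K w (α \ β) :=
        Finset.sum_congr rfl fun β hβ => by rw [hfix β hβ]
      have hS2 : ∑ β ∈ (α.erase b).powerset,
            gaudin K z (insert b β) * gaudin K w (α \ insert b β)
          = (∑ β ∈ (α.erase b).powerset,
              gaudin K z₀ (insert b β) * gaudin K w (α \ insert b β))
            + z b * ∑ β ∈ (α.erase b).powerset,
                gaudin K z' β * gaudin K w ((α.erase b) \ β) := by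
        rw [Finset.mul_sum, ← Finset.sum_add_distrib]
        refine Finset.sum_congr rfl fun β hβ => ?_
        rw [cof β hβ, hsd β hβ]
        ring
      have hIH := IH (α.erase b) (Finset.erase_ssubset hbα) z' w
      calc gaudin K (z + w) α
          = gaudin K (z₀ + w) α + z b * gaudin K (z' + w) (α.erase b) := eL
        _ = (∑ β ∈ α.powerset, gaudin K z₀ β * gaudin K w (α \ β))
            + z b * gaudin K (z' + w) (α.erase b) := by rw [base]
        _ = ∑ β ∈ α.powerset, gaudin K z β * gaudin K w (α \ β) := by
            rw [hsum z, hsum z₀, hS1, hS2, hIH]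
            ring
  exact inner α Finset.Subset.rfl z fun j hj hj' => absurd hj hj'
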